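/- Let d_T and d_w (w ∈ W) be nonnegative functions of pairs v₁, v₂ such that d_T(v₁,v₂) + 1 ≥ |{w : d_w(v₁,v₂) ≥ κ}| + |{w : 0 < d_w(v₁,v₂) < κ}| for a fixed κ > 0 (only finitely many w have d_w(v₁,v₂) > 0). Then d_T(v₁,v₂) + Σ_w d_w(v₁,v₂) ≤ (κ+1)([d_T(v₁,v₂)]_κ + Σ_w [d_w(v₁,v₂)]_κ) + κ² + 2κ, where [A]_κ = A if A ≥ κ and 0 otherwise. -/
import Mathlib


/-- Truncation: [A]_κ = A if A ≥ κ, else 0. -/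
noncomputable def trunc (A κ : ℝ) : ℝ := if κ ≤ A then A else 0

/-- Lemma 5.2: if the number of w with d_w > 0 is at most d_T + 1, then
    d_T + Σ d_w ≤ (κ+1)([d_T]_κ + Σ [d_w]_κ) + κ² + 2κ. -/
theorem truncated_distance_sum_bound (W : Type*) (dT : ℝ) (dw : W → ℝ) (κ : ℝ)
    (hκ : 0 < κ) (hdT : 0 ≤ dT) (hdw : ∀ w, 0 ≤ dw w)
    (hfin : {w : W | 0 < dw w}.Finite)
    (hcount : ({w : W | κ ≤ dw w}.ncard : ℝ) + ({w : W | 0 < dw w ∧ dw w < κ}.ncard : ℝ)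
      ≤ dT + 1) :
    dT + ∑' w, dw w ≤
      (κ + 1) * (trunc dT κ + ∑' w, trunc (dw w) κ) + κ ^ 2 + 2 * κ := by
  classical
  set s := hfin.toFinset with hs
  have hmem : ∀ w, w ∈ s ↔ 0 < dw w := fun w => hfin.mem_toFinset
  have hzero : ∀ w ∉ s, dw w = 0 := by
    intro w hw
    by_contra h
    exact hw ((hmem w).2 (lt_of_le_of_ne (hdw w) (Ne.symm h)))
  have hsum : ∑' w, dw w = ∑ w ∈ s, dw w :=
    tsum_eq_sum (fun w hw => hzero w hw)
  have htsum : ∑' w, trunc (dw w) κ = ∑ w ∈ s, trunc (dw w) κ := by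
    refine tsum_eq_sum (fun w hw => ?_)
    simp [trunc, hzero w hw]
  set B := s.filter (fun w => κ ≤ dw w) with hB
  set L := s.filter (fun w => ¬ κ ≤ dw w) with hL
  have hsetB : {w : W | κ ≤ dw w} = ↑B := by
    ext w
    simp only [Set.mem_setOf_eq, hB, Finset.coe_filter, Set.mem_setOf_eq, hmem]
    exact ⟨fun h => ⟨lt_of_lt_of_le hκ h, h⟩, fun h => h.2⟩
  have hsetL : {w : W | 0 < dw w ∧ dw w < κ} = ↑L := by
    ext w
    simp only [Set.mem_setOf_eq, hL, Finset.coe_filter, Set.mem_setOf_eq, hmem, not_le]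
  have hcardB : ({w : W | κ ≤ dw w}.ncard : ℝ) = B.card := by
    rw [hsetB, Set.ncard_coe_finset]
  have hcardL : ({w : W | 0 < dw w ∧ dw w < κ}.ncard : ℝ) = L.card := by
    rw [hsetL, Set.ncard_coe_finset]
  have hsplit : ∑ w ∈ s, dw w = ∑ w ∈ B, dw w + ∑ w ∈ L, dw w :=
    (Finset.sum_filter_add_sum_filter_not s _ _).symm
  have htruncsum : ∑ w ∈ s, trunc (dw w) κ = ∑ w ∈ B, dw w := by
    rw [← Finset.sum_filter_add_sum_filter_not s (fun w => κ ≤ dw w) (fun w => trunc (dw w) κ)]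
    have h1 : ∑ w ∈ B, trunc (dw w) κ = ∑ w ∈ B, dw w := by
      refine Finset.sum_congr rfl (fun w hw => ?_)
      have := (Finset.mem_filter.1 hw).2
      simp [trunc, this]
    have h2 : ∑ w ∈ L, trunc (dw w) κ = 0 := by
      refine Finset.sum_eq_zero (fun w hw => ?_)
      have := (Finset.mem_filter.1 hw).2
      simp [trunc, this]
    rw [h1, h2, add_zero]
  have hSL : ∑ w ∈ L, dw w ≤ (L.card : ℝ) * κ := by
    calc ∑ w ∈ L, dw w ≤ ∑ _w ∈ L, κ := by
          refine Finset.sum_le_sum (fun w hw => ?_)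
          exact le_of_lt (not_le.1 (Finset.mem_filter.1 hw).2)
      _ = (L.card : ℝ) * κ := by rw [Finset.sum_const, nsmul_eq_mul]
  have hSB : 0 ≤ ∑ w ∈ B, dw w := Finset.sum_nonneg (fun w _ => hdw w)
  have hnB : (0:ℝ) ≤ B.card := Nat.cast_nonneg _
  have hcount' : (B.card : ℝ) + L.card ≤ dT + 1 := by
    rw [← hcardB, ← hcardL]; exact hcount
  rw [hsum, htsum, htruncsum, hsplit]
  by_cases hdTκ : κ ≤ dT
  · have ht : trunc dT κ = dT := by simp [trunc, hdTκ]
    rw [ht]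
    nlinarith [mul_le_mul_of_nonneg_left hcount' hκ.le, hSL, hSB, hκ.le]
  · have ht : trunc dT κ = 0 := by simp [trunc, hdTκ]
    rw [ht]
    push_neg at hdTκ
    nlinarith [mul_le_mul_of_nonneg_left hcount' hκ.le, hSL, hSB, hκ.le]
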